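/- arXiv:2405.00671 — 5 statements merged into one kernel-verified Lean document; each statement's English description precedes it below -/
import Mathlib

section
/- Let G be a group and σ : G → G a group homomorphism. Let N be a subgroup of G with σ(N) ⊆ N, and assume the Lang map is surjective on N, i.e. for every n ∈ N there exists n₀ ∈ N with n₀⁻¹σ(n₀) = n. Set X = {g ∈ G : g⁻¹σ(g) ∈ N}. Then: (i) X is stable under right multiplication by N; (ii) every element of X lies in the same right N-coset as some element of G^σ; (iii) two elements h, h' ∈ G^σ satisfy h' ∈ h·N if and only if h' ∈ h·N^σ. Consequently the inclusion G^σ ⊆ X induces a bijection G^σ/N^σ → X/N between the set of right N^σ-cosets in G^σ and the set of right N-cosets meeting X. -/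
/-- Point-level content of `X/N ≅ G^σ/N^σ` (equation (3.2) in Lemma 3.3):
with the Lang map surjective on `N`, the set `X = {g : g⁻¹σ(g) ∈ N}` is stable under
right `N`-multiplication, every element of `X` is in the same right `N`-coset as a
`σ`-fixed element, and two `σ`-fixed elements are in the same right `N`-coset iff they
are in the same right `N^σ`-coset; hence `G^σ/N^σ ≅ X/N`. -/
theorem stmt_3 {G : Type*} [Group G] (σ : G →* G) (N : Subgroup G)
    (hσN : ∀ n ∈ N, σ n ∈ N)
    (hLang : ∀ n ∈ N, ∃ n₀ ∈ N, n₀⁻¹ * σ n₀ = n) :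
    (∀ g, g⁻¹ * σ g ∈ N → ∀ n ∈ N, (g * n)⁻¹ * σ (g * n) ∈ N) ∧
    (∀ g, g⁻¹ * σ g ∈ N → ∃ h, σ h = h ∧ ∃ n ∈ N, g = h * n) ∧
    (∀ h h', σ h = h → σ h' = h' →
      ((∃ n ∈ N, h' = h * n) ↔ ∃ n ∈ N, σ n = n ∧ h' = h * n)) := by
  refine ⟨?_, ?_, ?_⟩
  · intro g hg n hn
    have : (g * n)⁻¹ * σ (g * n) = n⁻¹ * (g⁻¹ * σ g) * σ n := by
      simp [mul_assoc]
    rw [this]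
    exact N.mul_mem (N.mul_mem (N.inv_mem hn) hg) (hσN n hn)
  · intro g hg
    obtain ⟨n₀, hn₀, hL⟩ := hLang _ hg
    refine ⟨g * n₀⁻¹, ?_, n₀, hn₀, by group⟩
    have h1 : σ n₀ = n₀ * (g⁻¹ * σ g) := by
      rw [← hL]; group
    have : σ (g * n₀⁻¹) = σ g * (σ n₀)⁻¹ := by simp
    rw [this, h1]
    group
  · intro h h' hh hh'
    constructor
    · rintro ⟨n, hn, rfl⟩
      refine ⟨n, hn, ?_, rfl⟩
      have := hh'
      rw [map_mul, hh] at this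
      exact mul_left_cancel this
    · rintro ⟨n, hn, _, rfl⟩
      exact ⟨n, hn, rfl⟩
end

section
/- Let G be a group and σ : G → G a group homomorphism. Let D be a normal subgroup of G with σ(D) ⊆ D, let N' be a subgroup of G contained in D, and let T be a subgroup of G such that τ·N'·τ⁻¹ = N' for every τ ∈ T. Assume that for every x ∈ G with x⁻¹σ(x) ∈ D there exists τ ∈ T with σ(τ) = τ and x·τ⁻¹ ∈ D. Then {x ∈ G : x⁻¹σ(x) ∈ N'} is the union over τ ∈ T^σ of the sets {y ∈ D : y⁻¹σ(y) ∈ N'}·τ; that is, x ∈ G satisfies x⁻¹σ(x) ∈ N' if and only if x = y·τ for some τ ∈ T with σ(τ) = τ and some y ∈ D with y⁻¹σ(y) ∈ N'. -/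
/-- Point-level content of Lemma 3.5: the Lusztig variety for `G` decomposes as the
union over `τ ∈ T^σ` of translates of the corresponding variety for the derived
group `D`. -/
theorem stmt_5 {G : Type*} [Group G] (σ : G →* G) (D N' T : Subgroup G)
    [D.Normal]
    (hσD : ∀ d ∈ D, σ d ∈ D)
    (hN'D : N' ≤ D)
    (hT : ∀ τ ∈ T, ∀ n, n ∈ N' ↔ τ * n * τ⁻¹ ∈ N')
    (hlift : ∀ x : G, x⁻¹ * σ x ∈ D → ∃ τ ∈ T, σ τ = τ ∧ x * τ⁻¹ ∈ D) :
    ∀ x : G, x⁻¹ * σ x ∈ N' ↔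
      ∃ τ ∈ T, σ τ = τ ∧ ∃ y ∈ D, y⁻¹ * σ y ∈ N' ∧ x = y * τ := by
  intro x
  constructor
  · intro hx
    obtain ⟨τ, hτT, hστ, hyD⟩ := hlift x (hN'D hx)
    refine ⟨τ, hτT, hστ, x * τ⁻¹, hyD, ?_, by group⟩
    have : (x * τ⁻¹)⁻¹ * σ (x * τ⁻¹) = τ * (x⁻¹ * σ x) * τ⁻¹ := by
      simp [map_mul, map_inv, hστ]; group
    rw [this]
    exact (hT τ hτT _).mp hx
  · rintro ⟨τ, hτT, hστ, y, hyD, hyN, rfl⟩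
    have : (y * τ)⁻¹ * σ (y * τ) = τ⁻¹ * (y⁻¹ * σ y) * τ⁻¹⁻¹ := by
      simp [map_mul, hστ]; group
    rw [this]
    exact (hT τ⁻¹ (inv_mem hτT) _).mp hyN
end

section
/- Let G be a group and σ : G → G a group homomorphism such that the Lang map g ↦ g⁻¹σ(g) is surjective on G. Let U and N be subgroups of G. Set X = {g ∈ G : g⁻¹σ(g) ∈ σ(U)}, X' = {g' ∈ G : g'⁻¹σ(g') ∈ σ(N)}, and Σ = {(x, x', y) ∈ σ(U) × σ(N) × G : x·σ(y) = y·x'}. Then the map (g, g') ↦ (g⁻¹σ(g), g'⁻¹σ(g'), g⁻¹g') sends X × X' into Σ, is surjective onto Σ, is constant on the orbits of the diagonal left G^σ-action h·(g, g') = (h·g, h·g'), and separates these orbits. Consequently it induces a bijection G^σ\(X × X') → Σ. -/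
/-- Point-level content of the isomorphism
`X_{T,B} ×_{G^σ} X_{M,P} ≅ Σ` from Section 4.2: the map
`(g,g') ↦ (g⁻¹σ(g), g'⁻¹σ(g'), g⁻¹g')` sends `X × X'` into `Σ`, is surjective onto
`Σ`, is constant on diagonal `G^σ`-orbits, and separates them; hence it induces a
bijection `G^σ\(X × X') → Σ`. -/
theorem stmt_6 {G : Type*} [Group G] (σ : G →* G)
    (hLang : ∀ g : G, ∃ h : G, h⁻¹ * σ h = g)
    (U N : Subgroup G) :
    -- (1) the image triple satisfies the defining equation of Σ
    (∀ g g' : G, g⁻¹ * σ g ∈ U.map σ → g'⁻¹ * σ g' ∈ N.map σ →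
      (g⁻¹ * σ g) * σ (g⁻¹ * g') = (g⁻¹ * g') * (g'⁻¹ * σ g')) ∧
    -- (2) surjectivity onto Σ
    (∀ x x' y : G, x ∈ U.map σ → x' ∈ N.map σ → x * σ y = y * x' →
      ∃ g g' : G, g⁻¹ * σ g ∈ U.map σ ∧ g'⁻¹ * σ g' ∈ N.map σ ∧
        x = g⁻¹ * σ g ∧ x' = g'⁻¹ * σ g' ∧ y = g⁻¹ * g') ∧
    -- (3) constancy on diagonal G^σ-orbits
    (∀ h g g' : G, σ h = h →
      ((h * g)⁻¹ * σ (h * g), (h * g')⁻¹ * σ (h * g'), (h * g)⁻¹ * (h * g'))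
        = (g⁻¹ * σ g, g'⁻¹ * σ g', g⁻¹ * g')) ∧
    -- (4) separation of orbits, hence the induced map G^σ\(X × X') → Σ is bijective
    (∀ g g' g₁ g₁' : G,
      (g⁻¹ * σ g, g'⁻¹ * σ g', g⁻¹ * g')
        = (g₁⁻¹ * σ g₁, g₁'⁻¹ * σ g₁', g₁⁻¹ * g₁') →
      ∃ h : G, σ h = h ∧ g₁ = h * g ∧ g₁' = h * g') := by
  refine ⟨?_, ?_, ?_, ?_⟩
  · intro g g' _ _
    simp [mul_assoc]
  · intro x x' y hx hx' hxy
    obtain ⟨g, hg⟩ := hLang x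
    refine ⟨g, g * y, by rwa [hg], ?_, hg.symm, ?_, by group⟩
    · have h2 : (g * y)⁻¹ * σ (g * y) = x' := by
        rw [map_mul, mul_inv_rev, mul_assoc, ← mul_assoc g⁻¹, hg, hxy]
        group
      rwa [h2]
    · rw [map_mul, mul_inv_rev, mul_assoc, ← mul_assoc g⁻¹, hg, hxy]
      group
  · intro h g g' hh
    simp [map_mul, hh, mul_assoc]
  · intro g g' g₁ g₁' heq
    simp only [Prod.mk.injEq] at heq
    obtain ⟨h1, h2, h3⟩ := heq
    refine ⟨g₁ * g⁻¹, ?_, by group, ?_⟩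
    · rw [map_mul, map_inv]
      have : σ g₁ = g₁ * (g₁⁻¹ * σ g₁) := by group
      rw [this, ← h1]
      have : σ g = g * (g⁻¹ * σ g) := by group
      rw [this]
      group
    · have : g₁' = g₁ * (g₁⁻¹ * g₁') := by group
      rw [this, ← h3]
      group
end

section
/- Let G be a group and σ : G → G a group homomorphism. Let M' be a subgroup of G with σ(M') ⊆ M', and let U be a subgroup of G. Set S = {(u, μ) ∈ (U ∩ M') × M' : u·μ·σ(μ)⁻¹ ∈ σ(U)} and X = {g ∈ M' : g⁻¹σ(g) ∈ σ(U)}. Then the map (u, μ) ↦ (u·μ)⁻¹ sends S into X, is surjective onto X (for g ∈ X the pair (1, g⁻¹) is a preimage), and for each g ∈ X the fiber over g is exactly {(u, u⁻¹·g⁻¹) : u ∈ U ∩ M'}; in particular each fiber is in bijection with U ∩ M'. -/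
/-- Final step in the proof of Proposition 4.10: the map `(u,μ) ↦ (u·μ)⁻¹` sends
`S = {(u,μ) ∈ (U ∩ M') × M' : u·μ·σ(μ)⁻¹ ∈ σ(U)}` onto
`X = {g ∈ M' : g⁻¹σ(g) ∈ σ(U)}`, with `(1, g⁻¹)` a preimage of `g`, and the fiber
over `g` is exactly `{(u, u⁻¹·g⁻¹) : u ∈ U ∩ M'}`; in particular each fiber is in
bijection with `U ∩ M'`. -/
theorem stmt_10 {G : Type*} [Group G] (σ : G →* G) (M' U : Subgroup G)
    (hσM' : ∀ m ∈ M', σ m ∈ M') :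
    -- (1) the map sends S into X
    (∀ u μ : G, u ∈ U → u ∈ M' → μ ∈ M' → u * μ * (σ μ)⁻¹ ∈ U.map σ →
      (u * μ)⁻¹ ∈ M' ∧ ((u * μ)⁻¹)⁻¹ * σ ((u * μ)⁻¹) ∈ U.map σ) ∧
    -- (2) surjectivity: for g ∈ X, the pair (1, g⁻¹) lies in S and maps to g
    (∀ g : G, g ∈ M' → g⁻¹ * σ g ∈ U.map σ →
      (1 : G) ∈ U ∧ (1 : G) ∈ M' ∧ g⁻¹ ∈ M' ∧
        (1 : G) * g⁻¹ * (σ g⁻¹)⁻¹ ∈ U.map σ ∧ ((1 : G) * g⁻¹)⁻¹ = g) ∧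
    -- (3) the fiber over g ∈ X is exactly {(u, u⁻¹·g⁻¹) : u ∈ U ∩ M'}
    (∀ g : G, g ∈ M' → g⁻¹ * σ g ∈ U.map σ → ∀ u μ : G,
      ((u ∈ U ∧ u ∈ M' ∧ μ ∈ M' ∧ u * μ * (σ μ)⁻¹ ∈ U.map σ) ∧ (u * μ)⁻¹ = g) ↔
        (u ∈ U ∧ u ∈ M' ∧ μ = u⁻¹ * g⁻¹)) := by
  refine ⟨?_, ?_, ?_⟩
  · intro u μ hu huM hμM h
    refine ⟨M'.inv_mem (M'.mul_mem huM hμM), ?_⟩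
    have h2 : σ u ∈ U.map σ := ⟨u, hu, rfl⟩
    have := (U.map σ).mul_mem h (Subgroup.inv_mem _ h2)
    have heq : ((u * μ)⁻¹)⁻¹ * σ ((u * μ)⁻¹) = u * μ * (σ μ)⁻¹ * (σ u)⁻¹ := by
      simp [mul_assoc]
    rw [heq]; exact this
  · intro g hg hX
    refine ⟨U.one_mem, M'.one_mem, M'.inv_mem hg, ?_, by group⟩
    have heq : (1 : G) * g⁻¹ * (σ g⁻¹)⁻¹ = g⁻¹ * σ g := by simp
    rw [heq]; exact hX
  · intro g hg hX u μ
    constructor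
    · rintro ⟨⟨hu, huM, hμM, h⟩, hfib⟩
      refine ⟨hu, huM, ?_⟩
      have : u * μ = g⁻¹ := by rw [← inv_inv (u * μ), hfib]
      rw [← this]; group
    · rintro ⟨hu, huM, rfl⟩
      have hμM : u⁻¹ * g⁻¹ ∈ M' := M'.mul_mem (M'.inv_mem huM) (M'.inv_mem hg)
      have hσu : σ u ∈ U.map σ := ⟨u, hu, rfl⟩
      have heq : u * (u⁻¹ * g⁻¹) * (σ (u⁻¹ * g⁻¹))⁻¹ = g⁻¹ * σ g * σ u := by
        simp [mul_assoc]
      refine ⟨⟨hu, huM, hμM, ?_⟩, by group⟩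
      rw [heq]; exact (U.map σ).mul_mem hX hσu
end

section
/- Let G be a group and σ : G → G a group homomorphism. Let K be a normal subgroup of G with σ(K) ⊆ K, let B be a subgroup of K, and let U be a subgroup of G with U ∩ K ⊆ B. Let x̃ ∈ G be such that u := x̃⁻¹σ(x̃) lies in U and u·B·u⁻¹ = B. Then for every k ∈ K: (x̃·k)⁻¹σ(x̃·k) ∈ U·B if and only if (x̃·k·x̃⁻¹)⁻¹σ(x̃·k·x̃⁻¹) ∈ x̃·B·x̃⁻¹, where U·B denotes the set of products {u'·b : u' ∈ U, b ∈ B}. -/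
/-- Change-of-variables step in Section 5.1 identifying the fiber of the
depth-lowering projection: for `k ∈ K`, `(x̃k)⁻¹σ(x̃k) ∈ U·B` iff
`(x̃kx̃⁻¹)⁻¹σ(x̃kx̃⁻¹) ∈ x̃Bx̃⁻¹`, where `u = x̃⁻¹σ(x̃) ∈ U` and `uBu⁻¹ = B`. -/
theorem stmt_12 {G : Type*} [Group G] (σ : G →* G) (K B U : Subgroup G)
    [K.Normal]
    (hσK : ∀ k ∈ K, σ k ∈ K)
    (hBK : B ≤ K)
    (hUK : ∀ u ∈ U, u ∈ K → u ∈ B)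
    (xt : G) (hu : xt⁻¹ * σ xt ∈ U)
    (huB : ∀ b, b ∈ B ↔ (xt⁻¹ * σ xt) * b * (xt⁻¹ * σ xt)⁻¹ ∈ B) :
    ∀ k ∈ K,
      ((∃ u' ∈ U, ∃ b ∈ B, (xt * k)⁻¹ * σ (xt * k) = u' * b) ↔
        ∃ b ∈ B, (xt * k * xt⁻¹)⁻¹ * σ (xt * k * xt⁻¹) = xt * b * xt⁻¹) := by
  intro k hk
  set u := xt⁻¹ * σ xt with hu_def
  have hN : K.Normal := inferInstance
  have key : (xt * k)⁻¹ * σ (xt * k) = k⁻¹ * u * σ k := by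
    simp only [map_mul, hu_def]; group
  have keyR : (xt * k * xt⁻¹)⁻¹ * σ (xt * k * xt⁻¹)
      = xt * (k⁻¹ * u * σ k * u⁻¹) * xt⁻¹ := by
    simp only [map_mul, map_inv, hu_def]; group
  constructor
  · rintro ⟨u', hu', b, hb, heq⟩
    rw [key] at heq
    have hid : u' * u⁻¹ = k⁻¹ * (u * σ k * u⁻¹) * (u * b⁻¹ * u⁻¹) := by
      have h1 : u' = k⁻¹ * u * σ k * b⁻¹ := by rw [heq]; group
      rw [h1]; group
    have hk1 : u' * u⁻¹ ∈ K := by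
      rw [hid]
      exact mul_mem (mul_mem (inv_mem hk) (hN.conj_mem _ (hσK k hk) u))
        (hN.conj_mem _ (inv_mem (hBK hb)) u)
    have hb1 : u' * u⁻¹ ∈ B := hUK _ (mul_mem hu' (inv_mem hu)) hk1
    have hb2 : u * b * u⁻¹ ∈ B := (huB b).mp hb
    have hsplit : k⁻¹ * u * σ k * u⁻¹ = (u' * u⁻¹) * (u * b * u⁻¹) := by
      rw [heq]; group
    exact ⟨_, mul_mem hb1 hb2, by rw [keyR, hsplit]⟩
  · rintro ⟨b, hb, heq⟩
    rw [keyR] at heq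
    have hPb : k⁻¹ * u * σ k * u⁻¹ = b :=
      mul_left_cancel (mul_right_cancel heq)
    have hb' : u⁻¹ * b * u ∈ B := by
      refine (huB _).mpr ?_
      have h2 : u * (u⁻¹ * b * u) * u⁻¹ = b := by group
      rw [h2]; exact hb
    exact ⟨u, hu, u⁻¹ * b * u, hb', by rw [key, ← hPb]; group⟩
end
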